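/- arXiv:2310.02787 — 3 statements merged into one kernel-verified Lean document; each statement's English description precedes it below -/
import Mathlib

section
/- Let n ≥ 1, let u : ℝ^n → ℝ be a convex function and let φ : ℝ^{n+1} → [0,∞) be continuous. Then the set function ω(·, u, φ) defined on Borel sets B ⊂ ℝ^n by ω(B, u, φ) = ∫_{∂u(B)} φ(x, u*(x)) dx (integral with respect to Lebesgue measure on ℝ^n) is a Borel measure: ∂u(B) is Lebesgue measurable for every Borel B, ω(∅,u,φ)=0, and ω(·,u,φ) is countably additive on pairwise disjoint Borel sets. -/
open MeasureTheory Metric Set Filter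
open scoped RealInnerProductSpace ENNReal NNReal Topology

noncomputable section

/-- `ℝ^n` as a Euclidean space. -/
abbrev En (n : ℕ) := EuclideanSpace ℝ (Fin n)

/-- The subgradient of a function `u` at a point `x`:
`∂u(x) = {p : u(y) ≥ u(x) + p·(y−x) for all y}`. -/
def subgrad {n : ℕ} (u : En n → ℝ) (x : En n) : Set (En n) :=
  {p | ∀ y, u x + ⟪p, y - x⟫ ≤ u y}

/-- The image of a set `B` under the subgradient: `∂u(B) = ⋃_{x ∈ B} ∂u(x)`. -/
def subgradImage {n : ℕ} (u : En n → ℝ) (B : Set (En n)) : Set (En n) :=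
  ⋃ x ∈ B, subgrad u x

/-- The Fenchel–Legendre transform `u*(x) = sup_y (x·y − u(y))` (real-valued version). -/
def fenchel {n : ℕ} (u : En n → ℝ) (x : En n) : ℝ :=
  ⨆ y, (⟪x, y⟫ - u y)

/-- The vector `(x, t) ∈ ℝ^{n+1}` whose first `n` coordinates are `x` and last is `t`. -/
def lift {n : ℕ} (x : En n) (t : ℝ) : En (n + 1) :=
  WithLp.toLp 2 (Fin.snoc x t : Fin (n + 1) → ℝ)

/-- The set function `ω(B, u, φ) = ∫_{∂u(B)} φ(x, u*(x)) dx`. -/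
def omegaMeas {n : ℕ} (u : En n → ℝ) (φ : En (n + 1) → ℝ) (B : Set (En n)) : ℝ≥0∞ :=
  ∫⁻ x in subgradImage u B, ENNReal.ofReal (φ (lift x (fenchel u x)))

set_option linter.unusedSectionVars false

namespace OmegaAux

variable {n : ℕ} {u : En n → ℝ}

lemma subgradImage_iUnion {ι : Sort*} (B : ι → Set (En n)) :
    subgradImage u (⋃ i, B i) = ⋃ i, subgradImage u (B i) := by
  simp only [subgradImage, biUnion_iUnion]

lemma mem_subgradImage {B : Set (En n)} {p : En n} :
    p ∈ subgradImage u B ↔ ∃ x ∈ B, p ∈ subgrad u x := by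
  simp [subgradImage]

/-- If `v` is differentiable at `p` and `x` is a subgradient of `v` at `p`, then
`⟪x, w⟫ = fderiv ℝ v p w` for every `w`. -/
lemma subgrad_eq_fderiv {v : En n → ℝ} {p x : En n}
    (hd : DifferentiableAt ℝ v p) (hx : ∀ q, v p + ⟪x, q - p⟫ ≤ v q) (w : En n) :
    ⟪x, w⟫ = fderiv ℝ v p w := by
  set g : ℝ → ℝ := fun t => v (p + t • w) - (v p + t * ⟪x, w⟫) with hg
  have hline : HasDerivAt (fun t : ℝ => p + t • w) w 0 := by
    simpa using ((hasDerivAt_id (0:ℝ)).smul_const w).const_add p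
  have hcomp : HasDerivAt (fun t : ℝ => v (p + t • w)) (fderiv ℝ v p w) 0 := by
    have hd' : HasFDerivAt v (fderiv ℝ v p) (p + (0:ℝ) • w) := by
      simpa using hd.hasFDerivAt
    exact hd'.comp_hasDerivAt 0 hline
  have haff : HasDerivAt (fun t : ℝ => v p + t * ⟪x, w⟫) ⟪x, w⟫ 0 := by
    simpa using ((hasDerivAt_id (0:ℝ)).mul_const ⟪x, w⟫).const_add (v p)
  have hgd : HasDerivAt g (fderiv ℝ v p w - ⟪x, w⟫) 0 := hcomp.sub haff
  have hnonneg : ∀ t, g 0 ≤ g t := by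
    intro t
    have := hx (p + t • w)
    simp only [hg, add_sub_cancel_left, real_inner_smul_right] at this ⊢
    simp only [zero_smul, add_zero, zero_mul, sub_self]
    linarith
  have hmin : IsLocalMin g 0 := Filter.Eventually.of_forall hnonneg
  have := hmin.hasDerivAt_eq_zero hgd
  linarith [this]

lemma subgrad_unique {v : En n → ℝ} {p x y : En n}
    (hd : DifferentiableAt ℝ v p) (hx : ∀ q, v p + ⟪x, q - p⟫ ≤ v q)
    (hy : ∀ q, v p + ⟪y, q - p⟫ ≤ v q) : x = y := by
  have h : ∀ w, ⟪x - y, w⟫ = 0 := by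
    intro w
    rw [inner_sub_left, subgrad_eq_fderiv hd hx w, subgrad_eq_fderiv hd hy w, sub_self]
  have := h (x - y)
  rwa [inner_self_eq_zero, sub_eq_zero] at this


/-- The set of points lying in the subgradient at two distinct points. -/
def badSet (u : En n → ℝ) : Set (En n) :=
  {p | ∃ x y, x ≠ y ∧ p ∈ subgrad u x ∧ p ∈ subgrad u y}

variable (hu : ConvexOn ℝ univ u)

/-- truncated Legendre transform -/
def vm (u : En n → ℝ) (m : ℕ) (p : En n) : ℝ :=
  ⨆ y : closedBall (0 : En n) (m : ℝ), (⟪p, (y : En n)⟫ - u y)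

include hu

lemma ball_ne (m : ℕ) : Nonempty (closedBall (0 : En n) (m : ℝ)) :=
  ⟨⟨0, mem_closedBall_self (by positivity)⟩⟩

lemma ucont : Continuous u :=
  continuousOn_univ.mp (hu.continuousOn isOpen_univ)

lemma vm_bdd (m : ℕ) (p : En n) :
    BddAbove (range fun y : closedBall (0 : En n) (m : ℝ) => ⟪p, (y : En n)⟫ - u y) := by
  obtain ⟨z, hz, hzmin⟩ := (isCompact_closedBall (0 : En n) (m : ℝ)).exists_isMinOn
    ⟨0, mem_closedBall_self (by positivity)⟩ (ucont hu).continuousOn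
  refine ⟨‖p‖ * m - u z, ?_⟩
  rintro r ⟨⟨y, hy⟩, rfl⟩
  have h1 : ⟪p, y⟫ ≤ ‖p‖ * m := by
    calc ⟪p, y⟫ ≤ ‖p‖ * ‖y‖ := real_inner_le_norm p y
    _ ≤ ‖p‖ * m := by
        have : ‖y‖ ≤ (m : ℝ) := by simpa [dist_zero_right] using hy
        exact mul_le_mul_of_nonneg_left this (norm_nonneg p)
  have h2 : u z ≤ u y := hzmin hy
  simp only
  linarith

lemma vm_lipschitz (m : ℕ) : LipschitzWith (m : ℝ≥0) (vm u m) := by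
  apply LipschitzWith.of_dist_le_mul
  intro p q
  rw [Real.dist_eq, abs_sub_le_iff]
  have key : ∀ p q : En n, vm u m p - vm u m q ≤ (m : ℝ) * dist p q := by
    intro p q
    rw [sub_le_iff_le_add, vm]
    haveI := ball_ne hu (n := n) m
    refine ciSup_le ?_
    rintro ⟨y, hy⟩
    have h1 : ⟪q, y⟫ - u y ≤ vm u m q := le_ciSup (vm_bdd hu m q) ⟨y, hy⟩
    have h2 : ⟪p - q, y⟫ ≤ (m : ℝ) * dist p q := by
      calc ⟪p - q, y⟫ ≤ ‖p - q‖ * ‖y‖ := real_inner_le_norm _ _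
      _ ≤ ‖p - q‖ * m := by
          have : ‖y‖ ≤ (m : ℝ) := by simpa [dist_zero_right] using hy
          exact mul_le_mul_of_nonneg_left this (norm_nonneg _)
      _ = (m : ℝ) * dist p q := by rw [dist_eq_norm, mul_comm]
    have h3 : ⟪p, y⟫ = ⟪q, y⟫ + ⟪p - q, y⟫ := by rw [inner_sub_left]; ring
    simp only [NNReal.coe_natCast]
    linarith
  constructor
  · simpa [NNReal.coe_natCast] using key p q
  · simpa [NNReal.coe_natCast, dist_comm p q] using key q p

lemma vm_subgrad {p x : En n} (m : ℕ) (hx : p ∈ subgrad u x) (hxm : ‖x‖ ≤ (m : ℝ)) :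
    ∀ q, vm u m p + ⟪x, q - p⟫ ≤ vm u m q := by
  intro q
  have hxmem : x ∈ closedBall (0 : En n) (m : ℝ) := by simpa [dist_zero_right] using hxm
  haveI := ball_ne hu (n := n) m
  have hupper : vm u m p ≤ ⟪p, x⟫ - u x := by
    refine ciSup_le ?_
    rintro ⟨y, hy⟩
    have h := hx y
    have : ⟪p, y - x⟫ = ⟪p, y⟫ - ⟪p, x⟫ := inner_sub_right p y x
    simp only
    linarith
  have hlower : ⟪q, x⟫ - u x ≤ vm u m q := le_ciSup (vm_bdd hu m q) ⟨x, hxmem⟩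
  have h1 : ⟪x, q - p⟫ = ⟪q, x⟫ - ⟪p, x⟫ := by
    rw [inner_sub_right, real_inner_comm x q, real_inner_comm x p]
  linarith

lemma badSet_null : volume (badSet u) = 0 := by
  have hsub : badSet u ⊆ ⋃ m : ℕ, {p | ¬DifferentiableAt ℝ (vm u m) p} := by
    rintro p ⟨x, y, hxy, hpx, hpy⟩
    obtain ⟨m, hm⟩ := exists_nat_ge (max ‖x‖ ‖y‖)
    refine mem_iUnion.2 ⟨m, fun hd => hxy ?_⟩
    exact subgrad_unique hd
      (vm_subgrad hu m hpx (le_trans (le_max_left _ _) hm))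
      (vm_subgrad hu m hpy (le_trans (le_max_right _ _) hm))
  refine measure_mono_null hsub (measure_iUnion_null fun m => ?_)
  have := (vm_lipschitz hu m).ae_differentiableAt (μ := volume)
  rwa [ae_iff] at this


lemma isClosed_subgradImage_of_compact {K : Set (En n)} (hK : IsCompact K) :
    IsClosed (subgradImage u K) := by
  refine IsSeqClosed.isClosed ?_
  intro f p hf hfp
  choose x hxK hpx using fun k => mem_subgradImage.1 (hf k)
  obtain ⟨a, haK, φ, hφ, hxa⟩ := hK.tendsto_subseq hxK
  refine mem_subgradImage.2 ⟨a, haK, fun y => ?_⟩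
  have hfl : Tendsto (fun k => u (x (φ k)) + ⟪f (φ k), y - x (φ k)⟫) atTop
      (𝓝 (u a + ⟪p, y - a⟫)) := by
    refine Tendsto.add ?_ ?_
    · exact ((ucont hu).tendsto a).comp hxa
    · exact Tendsto.inner (hfp.comp hφ.tendsto_atTop) (tendsto_const_nhds.sub hxa)
  exact le_of_tendsto hfl (Eventually.of_forall fun k => hpx (φ k) y)

lemma measurableSet_subgradImage_of_closed {F : Set (En n)} (hF : IsClosed F) :
    MeasurableSet (subgradImage u F) := by
  have hrep : F = ⋃ m : ℕ, F ∩ closedBall 0 (m : ℝ) := by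
    ext z
    simp only [mem_iUnion, mem_inter_iff, mem_closedBall, dist_zero_right]
    constructor
    · intro hz
      obtain ⟨m, hm⟩ := exists_nat_ge ‖z‖
      exact ⟨m, hz, hm⟩
    · rintro ⟨m, hz, -⟩; exact hz
  rw [hrep, subgradImage_iUnion]
  refine MeasurableSet.iUnion fun m => ?_
  exact (isClosed_subgradImage_of_compact hu
    ((isCompact_closedBall _ _).inter_left hF)).measurableSet

lemma measurableSet_subgradImage_of_open {U : Set (En n)} (hU : IsOpen U) :
    MeasurableSet (subgradImage u U) := by
  have hrep : U = ⋃ m : ℕ, {x | (↑(m + 1) : ℝ≥0∞)⁻¹ ≤ EMetric.infEdist x Uᶜ} := by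
    ext z
    simp only [mem_iUnion, mem_setOf_eq]
    constructor
    · intro hz
      have hpos : 0 < EMetric.infEdist z Uᶜ := by
        rw [show EMetric.infEdist z Uᶜ = Metric.infEDist z Uᶜ from rfl, EMetric.infEdist_pos_iff_notMem_closure, hU.isClosed_compl.closure_eq]
        simpa using hz
      obtain ⟨k, hk⟩ := ENNReal.exists_inv_nat_lt hpos.ne'
      refine ⟨k, le_trans ?_ hk.le⟩
      gcongr
      exact_mod_cast Nat.le_succ k
    · rintro ⟨m, hm⟩
      have hpos : 0 < EMetric.infEdist z Uᶜ :=
        lt_of_lt_of_le (ENNReal.inv_pos.2 (ENNReal.natCast_ne_top (m + 1))) hm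
      rw [show EMetric.infEdist z Uᶜ = Metric.infEDist z Uᶜ from rfl, EMetric.infEdist_pos_iff_notMem_closure, hU.isClosed_compl.closure_eq] at hpos
      simpa using hpos
  rw [hrep, subgradImage_iUnion]
  refine MeasurableSet.iUnion fun m => ?_
  refine measurableSet_subgradImage_of_closed hu ?_
  exact isClosed_le continuous_const EMetric.continuous_infEdist

lemma nullMeasurable_subgradImage : ∀ ⦃B : Set (En n)⦄, MeasurableSet B →
    NullMeasurableSet (subgradImage u B) volume := by
  refine MeasurableSet.induction_on_open
    (fun U hU => (measurableSet_subgradImage_of_open hu hU).nullMeasurableSet) ?_ ?_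
  · intro t _ hC
    have huniv : MeasurableSet (subgradImage u univ) :=
      measurableSet_subgradImage_of_closed hu isClosed_univ
    refine NullMeasurableSet.congr (huniv.nullMeasurableSet.diff hC) ?_
    rw [MeasureTheory.ae_eq_set]
    constructor
    · refine measure_mono_null ?_ (badSet_null hu)
      rintro p ⟨⟨hpu, hpt⟩, hptc⟩
      obtain ⟨x, -, hpx⟩ := mem_subgradImage.1 hpu
      by_cases hx : x ∈ t
      · exact absurd (mem_subgradImage.2 ⟨x, hx, hpx⟩) hpt
      · exact absurd (mem_subgradImage.2 ⟨x, hx, hpx⟩) hptc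
    · refine measure_mono_null ?_ (badSet_null hu)
      rintro p ⟨hptc, hp⟩
      obtain ⟨x, hxtc, hpx⟩ := mem_subgradImage.1 hptc
      have hpuniv : p ∈ subgradImage u univ := mem_subgradImage.2 ⟨x, mem_univ x, hpx⟩
      have hpt : p ∈ subgradImage u t := by
        by_contra h
        exact hp ⟨hpuniv, h⟩
      obtain ⟨y, hyt, hpy⟩ := mem_subgradImage.1 hpt
      exact ⟨x, y, fun h => hxtc (h ▸ hyt), hpx, hpy⟩
  · intro f _ _ hC
    rw [subgradImage_iUnion]
    exact NullMeasurableSet.iUnion hC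

lemma aedisjoint_subgradImage {s t : Set (En n)} (hd : Disjoint s t) :
    AEDisjoint volume (subgradImage u s) (subgradImage u t) := by
  refine measure_mono_null ?_ (badSet_null hu)
  rintro p ⟨hps, hpt⟩
  obtain ⟨x, hxs, hpx⟩ := mem_subgradImage.1 hps
  obtain ⟨y, hyt, hpy⟩ := mem_subgradImage.1 hpt
  exact ⟨x, y, fun h => hd.ne_of_mem hxs hyt h, hpx, hpy⟩

end OmegaAux

/-- `ω(·, u, φ)` is a Borel measure: `∂u(B)` is Lebesgue measurable for
Borel `B`, `ω(∅) = 0`, and `ω` is countably additive on pairwise disjoint Borel sets. -/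
theorem omega_is_borel_measure (n : ℕ) (hn : 1 ≤ n)
    (u : En n → ℝ) (hu : ConvexOn ℝ univ u)
    (φ : En (n + 1) → ℝ) (hφc : Continuous φ) (hφ0 : ∀ z, 0 ≤ φ z) :
    (∀ B : Set (En n), MeasurableSet B → NullMeasurableSet (subgradImage u B) volume) ∧
    omegaMeas u φ (∅ : Set (En n)) = 0 ∧
    (∀ B : ℕ → Set (En n), (∀ i, MeasurableSet (B i)) →
      Pairwise (Function.onFun Disjoint B) →
      omegaMeas u φ (⋃ i, B i) = ∑' i, omegaMeas u φ (B i)) := by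
  refine ⟨fun B hB => OmegaAux.nullMeasurable_subgradImage hu hB, ?_, ?_⟩
  · simp [omegaMeas, subgradImage]
  · intro B hB hd
    simp only [omegaMeas, OmegaAux.subgradImage_iUnion]
    exact lintegral_iUnion₀ (fun i => OmegaAux.nullMeasurable_subgradImage hu (hB i))
      (fun i j hij => OmegaAux.aedisjoint_subgradImage hu (hd hij)) _
end
end

section
/- Let n ≥ 1 and let ρ be a finite Borel measure on ℝ^n with finite first moment that is not concentrated on any affine hyperplane (no affine hyperplane H has ρ(ℝ^n \ H) = 0). Define the measure ρ' on ℝ^n by ρ'(B) = ∫_B √(1+|x|²) dρ(x), let L(x) = (x,−1)/√(1+|x|²), let L_♯ρ' be the push-forward of ρ' to the lower open hemisphere S^n_- extended by zero to all of S^n, and set ρ̄ = L_♯ρ' + (L_♯ρ')∘R where R(ξ) = −ξ. Then ρ̄ is a finite even Borel measure on S^n (invariant under the antipodal map), and ρ̄ is not concentrated on any great subsphere: for every linear hyperplane W ⊂ ℝ^{n+1}, ρ̄(S^n \ W) > 0. -/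
open MeasureTheory Metric Set Filter
open scoped RealInnerProductSpace ENNReal NNReal Topology

noncomputable section

/-- The map `L : ℝ^n → S^n`, `L(x) = (x, −1)/√(1+|x|²)`. -/
def Lmap {n : ℕ} (x : En n) : En (n + 1) :=
  (Real.sqrt (1 + ‖x‖ ^ 2))⁻¹ • lift x (-1)

lemma lift_meas (n : ℕ) : Measurable fun x : En n => lift x (-1) := by
  unfold lift
  refine (PiLp.continuous_toLp 2 _).measurable.comp ?_
  apply measurable_pi_iff.2
  intro i
  refine Fin.lastCases ?_ ?_ i
  · simp only [lift, Fin.snoc_last]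
    exact measurable_const
  · intro j
    simp only [lift, Fin.snoc_castSucc]
    exact (measurable_pi_apply j).comp (PiLp.continuous_ofLp 2 _).measurable

lemma Lmap_meas (n : ℕ) : Measurable (Lmap (n := n)) := by
  refine Measurable.smul (f := fun x : En n => (Real.sqrt (1 + ‖x‖ ^ 2))⁻¹) (g := fun x => lift x (-1)) ?_ ?_
  · exact ((measurable_const.add (measurable_norm.pow_const 2)).sqrt).inv
  · exact lift_meas n

lemma norm_lift (n : ℕ) (x : En n) : ‖lift x (-1)‖ = Real.sqrt (1 + ‖x‖ ^ 2) := by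
  have hx : ‖x‖ ^ 2 = ∑ j, ‖x j‖ ^ 2 := by
    rw [EuclideanSpace.norm_eq]
    exact Real.sq_sqrt (Finset.sum_nonneg fun j _ => by positivity)
  rw [EuclideanSpace.norm_eq]
  congr 1
  rw [Fin.sum_univ_castSucc, hx]
  simp [lift, add_comm]

lemma sqrt_pos' (x : ℝ) (hx : 0 ≤ x) : 0 < Real.sqrt (1 + x ^ 2) :=
  Real.sqrt_pos.2 (by positivity)

lemma norm_Lmap (n : ℕ) (x : En n) : ‖Lmap x‖ = 1 := by
  have h := sqrt_pos' ‖x‖ (norm_nonneg x)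
  rw [Lmap, norm_smul, norm_lift, Real.norm_eq_abs, abs_inv, abs_of_pos h,
    inv_mul_cancel₀ h.ne']

lemma inner_lift (n : ℕ) (v : En (n+1)) (x : En n) (t : ℝ) :
    ⟪v, lift x t⟫ = (∑ j, v j.castSucc * x j) + v (Fin.last n) * t := by
  simp only [lift, PiLp.inner_apply, RCLike.inner_apply, conj_trivial]
  rw [Fin.sum_univ_castSucc]
  simp [Fin.snoc_castSucc, Fin.snoc_last, mul_comm]


/-- the symmetrized lift `ρ̄ = L_♯ρ' + (L_♯ρ')∘R` of a measure `ρ` with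
finite first moment not concentrated on any affine hyperplane is a finite even Borel
measure on `S^n` not concentrated on any great subsphere. -/
theorem lifted_measure_even_not_concentrated (n : ℕ) (hn : 1 ≤ n)
    (ρ : Measure (En n)) [IsFiniteMeasure ρ]
    -- finite first moment
    (hρmom : ∫⁻ x, ‖x‖₊ ∂ρ ≠ ⊤)
    -- not concentrated on any affine hyperplane
    (hρhyp : ∀ (a : En n) (b : ℝ), a ≠ 0 → ρ {x | ⟪a, x⟫ = b}ᶜ ≠ 0) :
    -- ρ'(B) = ∫_B √(1+|x|²) dρ
    let ρ' : Measure (En n) :=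
      ρ.withDensity fun x => ENNReal.ofReal (Real.sqrt (1 + ‖x‖ ^ 2))
    -- ρ̄ = L_♯ρ' + (L_♯ρ')∘R with R(ξ) = −ξ
    let ρbar : Measure (En (n + 1)) :=
      ρ'.map Lmap + (ρ'.map Lmap).map fun ξ => -ξ
    IsFiniteMeasure ρbar ∧
    ρbar.map (fun ξ => -ξ) = ρbar ∧
    ∀ v : En (n + 1), v ≠ 0 →
      0 < ρbar ({ξ | ‖ξ‖ = 1} \ {ξ | ⟪v, ξ⟫ = 0}) := by
  intro ρ' ρbar
  have hρ'fin : IsFiniteMeasure ρ' := by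
    refine ⟨?_⟩
    show ρ.withDensity _ univ < ⊤
    rw [withDensity_apply _ MeasurableSet.univ, setLIntegral_univ]
    calc ∫⁻ x, ENNReal.ofReal (Real.sqrt (1 + ‖x‖ ^ 2)) ∂ρ
        ≤ ∫⁻ x, 1 + ‖x‖₊ ∂ρ := by
          refine lintegral_mono fun x => ?_
          have h1 : Real.sqrt (1 + ‖x‖ ^ 2) ≤ 1 + ‖x‖ := by
            rw [show (1:ℝ) + ‖x‖ = Real.sqrt ((1 + ‖x‖) ^ 2) from
              (Real.sqrt_sq (by positivity)).symm]
            apply Real.sqrt_le_sqrt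
            nlinarith [norm_nonneg x]
          calc ENNReal.ofReal (Real.sqrt (1 + ‖x‖ ^ 2))
              ≤ ENNReal.ofReal (1 + ‖x‖) := ENNReal.ofReal_le_ofReal h1
            _ = 1 + (‖x‖₊ : ℝ≥0∞) := by
                rw [ENNReal.ofReal_add zero_le_one (norm_nonneg x), ENNReal.ofReal_one,
                  ← coe_nnnorm, ENNReal.ofReal_coe_nnreal]
      _ = ρ univ + ∫⁻ x, ‖x‖₊ ∂ρ := by
          rw [lintegral_add_left measurable_const, lintegral_one]
      _ < ⊤ := ENNReal.add_lt_top.2 ⟨measure_lt_top ρ univ, hρmom.lt_top⟩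
  refine ⟨?_, ?_, ?_⟩
  · exact inferInstance
  · show (ρ'.map Lmap + (ρ'.map Lmap).map fun ξ => -ξ).map (fun ξ => -ξ) = _
    rw [Measure.map_add _ _ measurable_neg, Measure.map_map measurable_neg measurable_neg]
    have : (fun ξ : En (n+1) => -ξ) ∘ (fun ξ => -ξ) = id := by
      funext ξ; simp
    rw [this, Measure.map_id]
    exact add_comm _ _
  · intro v hv
    set a : En n := WithLp.toLp 2 (fun j => v j.castSucc : Fin n → ℝ) with ha
    set b : ℝ := v (Fin.last n) with hb
    have hinner : ∀ x : En n, ⟪v, Lmap x⟫ =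
        (Real.sqrt (1 + ‖x‖ ^ 2))⁻¹ * (⟪a, x⟫ - b) := by
      intro x
      rw [Lmap, real_inner_smul_right, inner_lift]
      congr 1
      simp only [PiLp.inner_apply, RCLike.inner_apply, conj_trivial, ha, hb, WithLp.ofLp_toLp, mul_comm]
      ring_nf
    -- the preimage of the set under Lmap
    set S : Set (En (n+1)) := {ξ | ‖ξ‖ = 1} \ {ξ | ⟪v, ξ⟫ = 0} with hS
    have hSm : MeasurableSet S := by
      refine MeasurableSet.diff ?_ ?_
      · exact measurable_norm (measurableSet_singleton 1)
      · exact (Continuous.measurable (continuous_const.inner continuous_id :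
            Continuous fun ξ : En (n+1) => ⟪v, ξ⟫))
          (measurableSet_singleton 0)
    have hpre : Lmap ⁻¹' S = {x : En n | ⟪a, x⟫ = b}ᶜ := by
      ext x
      simp only [hS, mem_preimage, mem_diff, mem_setOf_eq, mem_compl_iff, norm_Lmap,
        true_and, hinner]
      have h := sqrt_pos' ‖x‖ (norm_nonneg x)
      constructor
      · intro h0 heq
        exact h0 (by rw [heq]; ring)
      · intro hne h0
        rcases mul_eq_zero.1 h0 with h1 | h1
        · exact absurd h1 (inv_ne_zero h.ne')
        · exact hne (by linarith)
    have hTm : MeasurableSet ({x : En n | ⟪a, x⟫ = b}ᶜ) := by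
      refine MeasurableSet.compl ?_
      exact (Continuous.measurable (continuous_const.inner continuous_id :
            Continuous fun x : En n => ⟪a, x⟫))
        (measurableSet_singleton b)
    have hρT : ρ {x : En n | ⟪a, x⟫ = b}ᶜ ≠ 0 := by
      by_cases hA : a = 0
      · -- then b ≠ 0 and the set is univ
        have hbne : b ≠ 0 := by
          intro hb0
          apply hv
          ext i
          refine Fin.lastCases ?_ ?_ i
          · exact hb0
          · intro j
            have := congrArg (fun w : En n => w j) hA
            simpa [ha] using this
        have huniv : {x : En n | ⟪a, x⟫ = b}ᶜ = univ := by
          ext x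
          simp only [mem_compl_iff, mem_setOf_eq, mem_univ, iff_true, hA]
          rw [inner_zero_left]
          exact fun h => hbne h.symm
        rw [huniv]
        intro h0
        have a0 : En n := EuclideanSpace.single (⟨0, hn⟩ : Fin n) (1:ℝ)
        refine hρhyp (EuclideanSpace.single (⟨0, hn⟩ : Fin n) (1:ℝ)) 0 ?_ ?_
        · intro hc
          have := congrArg (fun w : En n => w (⟨0, hn⟩ : Fin n)) hc
          simp [EuclideanSpace.single_apply] at this
        · exact le_antisymm (h0 ▸ measure_mono (subset_univ _)) zero_le
      · exact hρhyp a b hA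
    have hρ'T : 0 < ρ' ({x : En n | ⟪a, x⟫ = b}ᶜ) := by
      have : ρ {x : En n | ⟪a, x⟫ = b}ᶜ ≤ ρ' ({x : En n | ⟪a, x⟫ = b}ᶜ) := by
        show _ ≤ ρ.withDensity _ _
        rw [withDensity_apply _ hTm]
        calc ρ {x : En n | ⟪a, x⟫ = b}ᶜ
            = ∫⁻ _ in {x : En n | ⟪a, x⟫ = b}ᶜ, 1 ∂ρ := by
              rw [setLIntegral_one]
          _ ≤ _ := by
              refine setLIntegral_mono' hTm fun x _ => ?_
              have h1 : Real.sqrt 1 ≤ Real.sqrt (1 + ‖x‖ ^ 2) :=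
                Real.sqrt_le_sqrt (by nlinarith [sq_nonneg ‖x‖])
              rw [Real.sqrt_one] at h1
              calc (1:ℝ≥0∞) = ENNReal.ofReal 1 := ENNReal.ofReal_one.symm
                _ ≤ _ := ENNReal.ofReal_le_ofReal h1
      exact lt_of_lt_of_le (pos_iff_ne_zero.2 hρT) this
    have hμS : 0 < (ρ'.map Lmap) S := by
      rw [Measure.map_apply (Lmap_meas n) hSm, hpre]
      exact hρ'T
    calc (0:ℝ≥0∞) < (ρ'.map Lmap) S := hμS
      _ ≤ ρbar S := by
          show _ ≤ (ρ'.map Lmap + (ρ'.map Lmap).map fun ξ => -ξ) S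
          simp only [Measure.add_apply]
          exact le_self_add
end
end

section
/- Let n ≥ 1, let u : ℝ^n → ℝ be a convex Lipschitz function that is coercive (u(x) → ∞ as |x| → ∞), and suppose u satisfies, for some constant c > 0 and continuous functions f : ℝ^n → ℝ, φ : ℝ^{n+1} → ℝ with f ≥ c₀ > 0 and φ ≥ c₀ > 0, the weak Monge–Ampère equation ∫_B f(x) dx = ∫_{∂u(B)} c φ(x, u*(x)) dx for all Borel B ⊂ ℝ^n. Then for every t ∈ ℝ the sublevel set Ω_t = {x : u(x) < t} is bounded, and there exist constants 0 < c₁ < c₂ (depending on t) such that c₁ λ(B) ≤ λ(∂u(B)) ≤ c₂ λ(B) for every Borel set B ⊂ Ω_t, where λ denotes Lebesgue measure on ℝ^n. -/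
open MeasureTheory Metric Set Filter
open scoped RealInnerProductSpace ENNReal NNReal Topology

noncomputable section

lemma mem_subgradImage {n : ℕ} {u : En n → ℝ} {B : Set (En n)} {p : En n} :
    p ∈ subgradImage u B ↔ ∃ x ∈ B, p ∈ subgrad u x := by
  simp [subgradImage]

lemma subgradImage_mono {n : ℕ} {u : En n → ℝ} {A B : Set (En n)} (h : A ⊆ B) :
    subgradImage u A ⊆ subgradImage u B := by
  intro p hp
  obtain ⟨x, hx, hpx⟩ := mem_subgradImage.1 hp
  exact mem_subgradImage.2 ⟨x, h hx, hpx⟩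

lemma subgrad_norm_le {n : ℕ} {u : En n → ℝ} {K : ℝ≥0} (hlip : LipschitzWith K u)
    {x p : En n} (hp : p ∈ subgrad u x) : ‖p‖ ≤ (K : ℝ) := by
  have h1 : u x + ⟪p, (x + p) - x⟫ ≤ u (x + p) := hp (x + p)
  have h2 : ⟪p, p⟫ ≤ u (x + p) - u x := by
    have : (x + p) - x = p := by abel
    rw [this] at h1; linarith
  have h3 : u (x + p) - u x ≤ (K : ℝ) * ‖p‖ := by
    have := hlip.dist_le_mul (x + p) x
    rw [Real.dist_eq] at this
    have hd : dist (x + p) x = ‖p‖ := by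
      rw [dist_eq_norm]; congr 1; abel
    rw [hd] at this
    calc u (x + p) - u x ≤ |u (x + p) - u x| := le_abs_self _
      _ ≤ (K : ℝ) * ‖p‖ := this
  have h4 : ‖p‖ * ‖p‖ ≤ (K : ℝ) * ‖p‖ := by
    rw [← real_inner_self_eq_norm_mul_norm]; linarith
  rcases eq_or_lt_of_le (norm_nonneg p) with h | h
  · rw [← h]; exact K.2
  · exact le_of_mul_le_mul_right (by linarith [h4]) h

lemma fenchel_subgrad {n : ℕ} {u : En n → ℝ} {x p : En n} (hp : p ∈ subgrad u x) :
    fenchel u p = ⟪p, x⟫ - u x := by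
  have hub : ∀ y, ⟪p, y⟫ - u y ≤ ⟪p, x⟫ - u x := by
    intro y
    have h1 := hp y
    have h2 : ⟪p, y - x⟫ = ⟪p, y⟫ - ⟪p, x⟫ := inner_sub_right _ _ _
    linarith
  refine le_antisymm (ciSup_le hub) ?_
  have hb : BddAbove (Set.range fun y => ⟪p, y⟫ - u y) := by
    refine ⟨⟪p, x⟫ - u x, ?_⟩
    rintro _ ⟨y, rfl⟩
    exact hub y
  have := le_ciSup hb x
  exact this

lemma isCompact_subgradImage {n : ℕ} {u : En n → ℝ} {K : ℝ≥0} (hlip : LipschitzWith K u)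
    {F : Set (En n)} (hF : IsCompact F) : IsCompact (subgradImage u F) := by
  have hsub : subgradImage u F ⊆ closedBall (0 : En n) (K : ℝ) := by
    intro p hp
    obtain ⟨x, _, hpx⟩ := mem_subgradImage.1 hp
    simpa [mem_closedBall_zero_iff] using subgrad_norm_le hlip hpx
  refine (isCompact_closedBall (0 : En n) (K : ℝ)).of_isClosed_subset ?_ hsub
  refine IsSeqClosed.isClosed ?_
  intro p q hp hq
  choose x hxF hpx using fun k => mem_subgradImage.1 (hp k)
  obtain ⟨a, haF, ψ, hψ, hxa⟩ := hF.tendsto_subseq hxF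
  refine mem_subgradImage.2 ⟨a, haF, fun y => ?_⟩
  have hq' : Tendsto (fun k => p (ψ k)) atTop (𝓝 q) := hq.comp hψ.tendsto_atTop
  have hu' : Tendsto (fun k => u (x (ψ k))) atTop (𝓝 (u a)) :=
    (hlip.continuous.tendsto a).comp hxa
  have hin : Tendsto (fun k => (⟪p (ψ k), y - x (ψ k)⟫ : ℝ)) atTop (𝓝 ⟪q, y - a⟫) :=
    hq'.inner (tendsto_const_nhds.sub hxa)
  refine le_of_tendsto (hu'.add hin) (Eventually.of_forall fun k => hpx (ψ k) y)

lemma norm_lift_le {n : ℕ} (x : En n) (s : ℝ) : ‖lift x s‖ ≤ ‖x‖ + |s| := by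
  have h1 : ‖lift x s‖ = Real.sqrt (∑ i, ‖(lift x s) i‖ ^ 2) := EuclideanSpace.norm_eq _
  have h2 : ∑ i, ‖(lift x s) i‖ ^ 2 = (∑ i, ‖x i‖ ^ 2) + |s| ^ 2 := by
    rw [Fin.sum_univ_castSucc]
    simp [lift, Fin.snoc_castSucc, Fin.snoc_last, Real.norm_eq_abs, sq_abs]
  have h3 : (∑ i, ‖x i‖ ^ 2) = ‖x‖ ^ 2 := by
    rw [EuclideanSpace.norm_eq, Real.sq_sqrt]
    positivity
  rw [h1, h2, h3]
  have h4 : ‖x‖ ^ 2 + |s| ^ 2 ≤ (‖x‖ + |s|) ^ 2 := by nlinarith [norm_nonneg x, abs_nonneg s]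
  calc Real.sqrt (‖x‖ ^ 2 + |s| ^ 2) ≤ Real.sqrt ((‖x‖ + |s|) ^ 2) := Real.sqrt_le_sqrt h4
    _ = ‖x‖ + |s| := Real.sqrt_sq (by positivity)

/-- for a coercive convex Lipschitz weak solution of the weighted
Monge–Ampère equation with strictly positive continuous data, every sublevel set
`Ω_t = {u < t}` is bounded and the Monge–Ampère measure `B ↦ λ(∂u(B))` is comparable
to the Lebesgue measure on subsets of `Ω_t`. -/
theorem sublevel_bounded_and_MA_comparable (n : ℕ) (hn : 1 ≤ n)
    (u : En n → ℝ) (hu : ConvexOn ℝ univ u)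
    (K : ℝ≥0) (hlip : LipschitzWith K u)
    (hcoe : Tendsto u (cocompact (En n)) atTop)
    (c c₀ : ℝ) (hc : 0 < c) (hc₀ : 0 < c₀)
    (f : En n → ℝ) (φ : En (n + 1) → ℝ)
    (hfc : Continuous f) (hφc : Continuous φ)
    (hf : ∀ x, c₀ ≤ f x) (hφ : ∀ z, c₀ ≤ φ z)
    -- weak Monge–Ampère equation
    (hsol : ∀ B : Set (En n), MeasurableSet B →
      ∫⁻ x in B, ENNReal.ofReal (f x) =
        ∫⁻ x in subgradImage u B, ENNReal.ofReal (c * φ (lift x (fenchel u x)))) :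
    ∀ t : ℝ,
      Bornology.IsBounded {x : En n | u x < t} ∧
      ∃ c₁ c₂ : ℝ, 0 < c₁ ∧ c₁ < c₂ ∧
        ∀ B : Set (En n), MeasurableSet B → B ⊆ {x : En n | u x < t} →
          ENNReal.ofReal c₁ * volume B ≤ volume (subgradImage u B) ∧
          volume (subgradImage u B) ≤ ENNReal.ofReal c₂ * volume B := by
  intro t
  obtain ⟨C, hCcomp, hCsub⟩ : ∃ C : Set (En n), IsCompact C ∧ {x : En n | u x < t} ⊆ C := by
    have h1 : {x : En n | t ≤ u x} ∈ cocompact (En n) := hcoe.eventually_ge_atTop t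
    rw [mem_cocompact] at h1
    obtain ⟨C, hC, hsub⟩ := h1
    refine ⟨C, hC, fun x hx => ?_⟩
    by_contra h
    have h2 := hsub h
    simp only [mem_setOf_eq] at hx h2
    linarith
  have hbdd : Bornology.IsBounded {x : En n | u x < t} := hCcomp.isBounded.subset hCsub
  refine ⟨hbdd, ?_⟩
  obtain ⟨R₀, hR₀⟩ := hbdd.subset_closedBall 0
  set R : ℝ := max R₀ 0 with hRdef
  have hR : {x : En n | u x < t} ⊆ closedBall 0 R :=
    hR₀.trans (closedBall_subset_closedBall (le_max_left _ _))
  have hR0 : 0 ≤ R := le_max_right _ _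
  set M₀ : ℝ := (K : ℝ) * R + (|u 0| + (K : ℝ) * R) with hM₀def
  have hM₀0 : 0 ≤ M₀ := by positivity
  set ρ : ℝ := (K : ℝ) + M₀ with hρdef
  have hρ0 : 0 ≤ ρ := by positivity
  have hkey : ∀ {x p : En n}, x ∈ closedBall (0 : En n) R → p ∈ subgrad u x →
      lift p (fenchel u p) ∈ closedBall (0 : En (n+1)) ρ := by
    intro x p hx hp
    have hpn : ‖p‖ ≤ (K : ℝ) := subgrad_norm_le hlip hp
    have hxn : ‖x‖ ≤ R := by simpa [mem_closedBall_zero_iff] using hx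
    have hux : |u x| ≤ |u 0| + (K : ℝ) * R := by
      have hl := hlip.dist_le_mul x 0
      rw [Real.dist_eq, dist_eq_norm, sub_zero] at hl
      have h1 : |u x| ≤ |u 0| + |u x - u 0| := by
        calc |u x| = |u 0 + (u x - u 0)| := by ring_nf
          _ ≤ |u 0| + |u x - u 0| := abs_add_le _ _
      have h2 : (K : ℝ) * ‖x‖ ≤ (K : ℝ) * R := mul_le_mul_of_nonneg_left hxn K.2
      linarith
    have hfen : |fenchel u p| ≤ M₀ := by
      rw [fenchel_subgrad hp]
      have h1 : |(⟪p, x⟫ : ℝ)| ≤ ‖p‖ * ‖x‖ := abs_real_inner_le_norm _ _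
      have h2 : |(⟪p, x⟫ : ℝ) - u x| ≤ |(⟪p, x⟫ : ℝ)| + |u x| := abs_sub _ _
      have h3 : ‖p‖ * ‖x‖ ≤ (K : ℝ) * R := mul_le_mul hpn hxn (norm_nonneg _) K.2
      rw [hM₀def]; linarith
    rw [mem_closedBall_zero_iff]
    calc ‖lift p (fenchel u p)‖ ≤ ‖p‖ + |fenchel u p| := norm_lift_le _ _
      _ ≤ ρ := by rw [hρdef]; linarith
  obtain ⟨z₀, hz₀, hz₀max⟩ := (isCompact_closedBall (0 : En (n+1)) ρ).exists_isMaxOn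
    ⟨0, mem_closedBall_self hρ0⟩ hφc.continuousOn
  set Mφ : ℝ := φ z₀ with hMφdef
  have hMφ0 : c₀ ≤ Mφ := hφ z₀
  have hMφpos : 0 < Mφ := lt_of_lt_of_le hc₀ hMφ0
  obtain ⟨x₀, hx₀, hx₀max⟩ := (isCompact_closedBall (0 : En n) R).exists_isMaxOn
    ⟨0, mem_closedBall_self hR0⟩ hfc.continuousOn
  set Mf : ℝ := f x₀ with hMfdef
  have hMf0 : c₀ ≤ Mf := hf x₀
  have hMfpos : 0 < Mf := lt_of_lt_of_le hc₀ hMf0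
  set c₁ : ℝ := c₀ / (c * Mφ) with hc₁def
  set c₂ : ℝ := c₁ + Mf / (c * c₀) with hc₂def
  have hc₁pos : 0 < c₁ := div_pos hc₀ (mul_pos hc hMφpos)
  have hc₁₂ : c₁ < c₂ := by
    rw [hc₂def]
    have h0 : 0 < Mf / (c * c₀) := div_pos hMfpos (mul_pos hc hc₀)
    linarith
  refine ⟨c₁, c₂, hc₁pos, hc₁₂, ?_⟩
  intro B hB hBsub
  set S := subgradImage u B with hSdef
  have hBR : B ⊆ closedBall 0 R := hBsub.trans hR
  have hSK : S ⊆ closedBall (0 : En n) (K : ℝ) := by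
    intro p hp
    obtain ⟨x, hx, hpx⟩ := mem_subgradImage.1 hp
    simpa [mem_closedBall_zero_iff] using subgrad_norm_le hlip hpx
  have hvolS : volume S ≠ ∞ :=
    ((measure_mono hSK).trans_lt measure_closedBall_lt_top).ne
  have hvolB : volume B ≠ ∞ :=
    ((measure_mono hBR).trans_lt measure_closedBall_lt_top).ne
  have hφS : ∀ p ∈ S, φ (lift p (fenchel u p)) ≤ Mφ := by
    intro p hp
    obtain ⟨x, hx, hpx⟩ := mem_subgradImage.1 hp
    exact hz₀max (hkey (hBR hx) hpx)
  constructor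
  · -- lower bound
    have hmain : ∀ F : Set (En n), F ⊆ B → IsCompact F →
        volume F ≤ ENNReal.ofReal (c * Mφ / c₀) * volume S := by
      intro F hFB hFc
      set SF := subgradImage u F with hSFdef
      have hSFc : IsCompact SF := isCompact_subgradImage hlip hFc
      have hSFS : SF ⊆ S := subgradImage_mono hFB
      have heq := hsol F hFc.measurableSet
      have h1 : ENNReal.ofReal c₀ * volume F ≤ ∫⁻ x in F, ENNReal.ofReal (f x) := by
        rw [← setLIntegral_const]
        exact lintegral_mono fun x => ENNReal.ofReal_le_ofReal (hf x)
      have h2 : (∫⁻ x in SF, ENNReal.ofReal (c * φ (lift x (fenchel u x))))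
          ≤ ENNReal.ofReal (c * Mφ) * volume SF := by
        rw [← setLIntegral_const]
        refine lintegral_mono_ae ?_
        refine (ae_restrict_mem hSFc.measurableSet).mono fun p hp => ?_
        exact ENNReal.ofReal_le_ofReal
          (mul_le_mul_of_nonneg_left (hφS p (hSFS hp)) hc.le)
      have h3 : ENNReal.ofReal c₀ * volume F ≤ ENNReal.ofReal (c * Mφ) * volume SF :=
        (h1.trans_eq heq).trans h2
      have h4 : ENNReal.ofReal c₀ * volume F
          ≤ ENNReal.ofReal c₀ * (ENNReal.ofReal (c * Mφ / c₀) * volume S) := by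
        refine h3.trans ?_
        rw [← mul_assoc, ← ENNReal.ofReal_mul hc₀.le]
        have hid : c₀ * (c * Mφ / c₀) = c * Mφ := by field_simp
        rw [hid]
        exact mul_le_mul_right (measure_mono hSFS) _
      exact (ENNReal.mul_le_mul_iff_right (ENNReal.ofReal_pos.2 hc₀).ne' ENNReal.ofReal_ne_top).1 h4
    have hBS : volume B ≤ ENNReal.ofReal (c * Mφ / c₀) * volume S := by
      refine le_of_forall_lt fun r hr => ?_
      obtain ⟨F, hFB, hFc, hrF⟩ := hB.exists_lt_isCompact_of_ne_top hvolB hr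
      exact hrF.trans_le (hmain F hFB hFc)
    calc ENNReal.ofReal c₁ * volume B
        ≤ ENNReal.ofReal c₁ * (ENNReal.ofReal (c * Mφ / c₀) * volume S) :=
          mul_le_mul_right hBS _
      _ = ENNReal.ofReal (c₁ * (c * Mφ / c₀)) * volume S := by
          rw [← mul_assoc, ← ENNReal.ofReal_mul hc₁pos.le]
      _ = volume S := by
          have hid : c₁ * (c * Mφ / c₀) = 1 := by
            rw [hc₁def]; field_simp
          rw [hid, ENNReal.ofReal_one, one_mul]
  · -- upper bound
    have h1 : ENNReal.ofReal (c * c₀) * volume S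
        ≤ ∫⁻ x in S, ENNReal.ofReal (c * φ (lift x (fenchel u x))) := by
      rw [← setLIntegral_const]
      exact lintegral_mono fun x => ENNReal.ofReal_le_ofReal
        (mul_le_mul_of_nonneg_left (hφ _) hc.le)
    have h2 : (∫⁻ x in B, ENNReal.ofReal (f x)) ≤ ENNReal.ofReal Mf * volume B := by
      rw [← setLIntegral_const]
      refine lintegral_mono_ae ?_
      refine (ae_restrict_mem hB).mono fun x hx => ?_
      exact ENNReal.ofReal_le_ofReal (hx₀max (hBR hx))
    have h3 : ENNReal.ofReal (c * c₀) * volume S ≤ ENNReal.ofReal Mf * volume B :=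
      (h1.trans_eq (hsol B hB).symm).trans h2
    have h4 : ENNReal.ofReal (c * c₀) * volume S
        ≤ ENNReal.ofReal (c * c₀) * (ENNReal.ofReal c₂ * volume B) := by
      refine h3.trans ?_
      rw [← mul_assoc, ← ENNReal.ofReal_mul (by positivity : (0:ℝ) ≤ c * c₀)]
      refine mul_le_mul_left (ENNReal.ofReal_le_ofReal ?_) _
      have hid : c * c₀ * (Mf / (c * c₀)) = Mf := by field_simp
      rw [hc₂def]
      nlinarith [mul_pos (mul_pos hc hc₀) hc₁pos]
    exact (ENNReal.mul_le_mul_iff_right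
      (ENNReal.ofReal_pos.2 (by positivity)).ne' ENNReal.ofReal_ne_top).1 h4
end
end
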